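/- For a binary [n,k] code C with generator matrix rows g_1,…,g_k, the code ideal I(C) in K[x_1,…,x_n] is generated by {x^{g_i} − 1 : 1 ≤ i ≤ k} ∪ {x_i^2 − 1 : 1 ≤ i ≤ n}. -/

import Mathlib

open MvPolynomial

/-- Exponent vector in {0,1}^n ⊆ ℕ^n of a word over F_2. -/
noncomputable def toExp {p n : ℕ} (c : Fin n → ZMod p) : Fin n →₀ ℕ :=
  Finsupp.equivFunOnFinite.symm fun i => (c i).val

/-- The code ideal I(C) = ⟨x^a − x^b : a − b ∈ C, a, b ∈ {0,1}^n⟩ + ⟨x_i^2 − 1⟩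
of a binary code C. -/
noncomputable def codeIdeal (K : Type*) [Field K] {n : ℕ}
    (C : Submodule (ZMod 2) (Fin n → ZMod 2)) : Ideal (MvPolynomial (Fin n) K) :=
  Ideal.span
    ({f | ∃ a b : Fin n → ZMod 2, a - b ∈ C ∧
        f = monomial (toExp a) (1 : K) - monomial (toExp b) 1} ∪
     {f | ∃ i : Fin n, f = X i ^ 2 - 1})

lemma toExp_apply {p n : ℕ} (c : Fin n → ZMod p) (i : Fin n) : toExp c i = (c i).val := rfl

lemma toExp_zero {p n : ℕ} [NeZero p] : toExp (0 : Fin n → ZMod p) = 0 := by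
  ext i; simp [toExp]

lemma monomial_eq_prod_univ {K : Type*} [Field K] {n : ℕ} (m : Fin n →₀ ℕ) :
    (monomial m (1 : K)) = ∏ i : Fin n, X i ^ m i := by
  rw [← prod_X_pow_eq_monomial]
  exact Finset.prod_subset (Finset.subset_univ _) fun x _ hx => by
    rw [Finsupp.notMem_support_iff.mp hx, pow_zero]

lemma pow_of_sq_eq_one {M : Type*} [Monoid M] (x : M) (h : x ^ 2 = 1) (m : ℕ) :
    x ^ m = x ^ (m % 2) := by
  conv_lhs => rw [← Nat.div_add_mod m 2]
  rw [pow_add, pow_mul, h, one_pow, one_mul]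

/-- for a binary [n,k] code C with generator matrix rows g_1,…,g_k,
I(C) is generated by {x^{g_i} − 1 : 1 ≤ i ≤ k} ∪ {x_i^2 − 1 : 1 ≤ i ≤ n}. -/
theorem stmt_10 (K : Type*) [Field K] (n k : ℕ) (g : Fin k → Fin n → ZMod 2)
    (C : Submodule (ZMod 2) (Fin n → ZMod 2))
    (hC : C = Submodule.span (ZMod 2) (Set.range g)) :
    codeIdeal K C =
      Ideal.span
        ({f | ∃ i : Fin k, f = monomial (toExp (g i)) (1 : K) - 1} ∪
         {f | ∃ i : Fin n, f = X i ^ 2 - 1}) := by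
  set J : Ideal (MvPolynomial (Fin n) K) := Ideal.span
        ({f | ∃ i : Fin k, f = monomial (toExp (g i)) (1 : K) - 1} ∪
         {f | ∃ i : Fin n, f = X i ^ 2 - 1}) with hJ
  set mk := Ideal.Quotient.mk J with hmk
  have hXsq : ∀ i : Fin n, (mk (X i)) ^ 2 = 1 := by
    intro i
    have h : (X i ^ 2 - 1 : MvPolynomial (Fin n) K) ∈ J :=
      Ideal.subset_span (Or.inr ⟨i, rfl⟩)
    have := Ideal.Quotient.eq.mpr (by simpa using h :
      (X i ^ 2 : MvPolynomial (Fin n) K) - 1 ∈ J)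
    rw [map_pow, map_one] at this
    exact this
  have hmul : ∀ c d : Fin n → ZMod 2,
      mk (monomial (toExp (c + d)) 1) = mk (monomial (toExp c) 1) * mk (monomial (toExp d) 1) := by
    intro c d
    rw [monomial_eq_prod_univ, monomial_eq_prod_univ, monomial_eq_prod_univ,
      map_prod, map_prod, map_prod, ← Finset.prod_mul_distrib]
    refine Finset.prod_congr rfl fun i _ => ?_
    rw [map_pow, map_pow, map_pow, ← pow_add,
      pow_of_sq_eq_one _ (hXsq i) (toExp (c + d) i),
      pow_of_sq_eq_one _ (hXsq i) (toExp c i + toExp d i)]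
    congr 1
    simp only [toExp_apply, Pi.add_apply, ZMod.val_add]
    omega
  have h00 : mk (monomial (toExp (0 : Fin n → ZMod 2)) 1) = 1 := by
    rw [toExp_zero, monomial_zero', map_one, map_one]
  let S : Submodule (ZMod 2) (Fin n → ZMod 2) :=
    { carrier := {c | mk (monomial (toExp c) 1) = 1}
      add_mem' := fun {a b} ha hb => by
        show mk (monomial (toExp (a + b)) 1) = 1
        rw [hmul, ha, hb, one_mul]
      zero_mem' := h00
      smul_mem' := by
        intro m c hc
        fin_cases m
        · show mk (monomial (toExp ((0 : ZMod 2) • c)) 1) = 1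
          rw [zero_smul]; exact h00
        · show mk (monomial (toExp ((1 : ZMod 2) • c)) 1) = 1
          rw [one_smul]; exact hc }
  have hg : ∀ i, g i ∈ S := by
    intro i
    have h : (monomial (toExp (g i)) (1 : K) - 1) ∈ J :=
      Ideal.subset_span (Or.inl ⟨i, rfl⟩)
    have := Ideal.Quotient.eq.mpr h
    exact (by simpa using this : mk (monomial (toExp (g i)) 1) = 1)
  have hCS : C ≤ S := by
    rw [hC]
    exact Submodule.span_le.mpr (by rintro _ ⟨i, rfl⟩; exact hg i)
  apply le_antisymm
  · rw [codeIdeal, Ideal.span_le]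
    rintro f (⟨a, b, hab, rfl⟩ | ⟨i, rfl⟩)
    · have h1 : mk (monomial (toExp (a - b)) 1) = 1 := hCS hab
      have h2 : mk (monomial (toExp a) 1) = mk (monomial (toExp b) 1) := by
        have := hmul (a - b) b
        rw [sub_add_cancel, h1, one_mul] at this
        exact this
      have := Ideal.Quotient.eq.mp h2
      simpa using this
    · exact Ideal.subset_span (Or.inr ⟨i, rfl⟩)
  · rw [hJ, Ideal.span_le]
    rintro f (⟨i, rfl⟩ | ⟨i, rfl⟩)
    · refine Ideal.subset_span (Or.inl ⟨g i, 0, ?_, ?_⟩)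
      · rw [sub_zero, hC]; exact Submodule.subset_span ⟨i, rfl⟩
      · rw [toExp_zero, monomial_zero']; simp
    · exact Ideal.subset_span (Or.inr ⟨i, rfl⟩)
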